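/- The bounded-curvature coverage function F(τ) = Σ_{s ∈ S} 𝟙[C(τ,s) > 0] · (1 + α(C(τ,s) - 1)) defined on subsets of S × T, where C(τ,s) = |{t : (s,t) ∈ τ}| and 0 ≤ α ≤ 1, is monotone submodular with submodular curvature k_F = 1 - α (when every state can be revisited, i.e., |T| ≥ 2). -/

import Mathlib

open Finset

def Submodular {V : Type*} [DecidableEq V] (F : Finset V → ℝ) : Prop :=
  ∀ A B : Finset V, ∀ v : V, A ⊆ B → v ∉ B →
    F (insert v B) - F B ≤ F (insert v A) - F A

def MonotoneSetFun {V : Type*} [DecidableEq V] (F : Finset V → ℝ) : Prop :=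
  ∀ A B : Finset V, A ⊆ B → F A ≤ F B

/-- Visit count of state `s` in trajectory `τ`. -/
def visitCount {S T : Type*} [DecidableEq S] [DecidableEq T]
    (τ : Finset (S × T)) (s : S) : ℕ :=
  (τ.filter (fun p => p.1 = s)).card

/-- Bounded-curvature coverage. -/
def bcCoverage {S T : Type*} [Fintype S] [DecidableEq S] [DecidableEq T]
    (α : ℝ) (τ : Finset (S × T)) : ℝ :=
  ∑ s : S, if 0 < visitCount τ s then 1 + α * ((visitCount τ s : ℝ) - 1) else 0

lemma visitCount_mono {S T : Type*} [DecidableEq S] [DecidableEq T]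
    {τ τ' : Finset (S × T)} (h : τ ⊆ τ') (s : S) :
    visitCount τ s ≤ visitCount τ' s :=
  Finset.card_le_card (Finset.filter_subset_filter _ h)

lemma visitCount_insert {S T : Type*} [DecidableEq S] [DecidableEq T]
    {τ : Finset (S × T)} {v : S × T} (h : v ∉ τ) (s : S) :
    visitCount (insert v τ) s = if v.1 = s then visitCount τ s + 1 else visitCount τ s := by
  unfold visitCount
  rw [Finset.filter_insert]
  split
  · rw [Finset.card_insert_of_notMem fun hm => h (Finset.mem_filter.mp hm).1]
  · rfl

lemma bcCoverage_insert {S T : Type*} [Fintype S] [DecidableEq S] [DecidableEq T]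
    (α : ℝ) {τ : Finset (S × T)} {v : S × T} (h : v ∉ τ) :
    bcCoverage α (insert v τ) =
      bcCoverage α τ + (if 0 < visitCount τ v.1 then α else 1) := by
  unfold bcCoverage
  have key : ∀ s : S,
      (if 0 < visitCount (insert v τ) s then
          1 + α * ((visitCount (insert v τ) s : ℝ) - 1) else 0) =
      (if 0 < visitCount τ s then 1 + α * ((visitCount τ s : ℝ) - 1) else 0) +
      (if s = v.1 then (if 0 < visitCount τ v.1 then α else 1) else 0) := by
    intro s
    rw [visitCount_insert h s]
    by_cases hs : v.1 = s
    · subst hs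
      simp only [eq_self_iff_true, if_true]
      rcases Nat.eq_zero_or_pos (visitCount τ v.1) with h0 | hp
      · simp [h0]
      · rw [if_pos (Nat.succ_pos _), if_pos hp, if_pos hp]
        push_cast
        ring
    · simp [hs, Ne.symm hs]
  rw [Finset.sum_congr rfl fun s _ => key s, Finset.sum_add_distrib,
    Finset.sum_ite_eq' Finset.univ v.1, if_pos (Finset.mem_univ _)]

lemma bcCoverage_singleton {S T : Type*} [Fintype S] [DecidableEq S] [DecidableEq T]
    (α : ℝ) (v : S × T) : bcCoverage α ({v} : Finset (S × T)) = 1 := by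
  have h : bcCoverage α (insert v (∅ : Finset (S × T))) =
      bcCoverage α (∅ : Finset (S × T)) + (if 0 < visitCount (∅ : Finset (S × T)) v.1 then α else 1) :=
    bcCoverage_insert α (Finset.notMem_empty v)
  simp only [LawfulSingleton.insert_empty_eq] at h
  rw [h]
  have h0 : visitCount (∅ : Finset (S × T)) v.1 = 0 := by simp [visitCount]
  rw [h0]
  simp [bcCoverage, visitCount]

lemma visitCount_univ {S T : Type*} [Fintype S] [DecidableEq S] [Fintype T] [DecidableEq T]
    (s : S) : visitCount (Finset.univ : Finset (S × T)) s = Fintype.card T := by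
  unfold visitCount
  have : (Finset.univ : Finset (S × T)).filter (fun p => p.1 = s) = {s} ×ˢ Finset.univ := by
    ext p
    simp [Prod.ext_iff, eq_comm]
  rw [this, Finset.card_product]
  simp

/-- The bounded-curvature coverage function is monotone submodular with
submodular curvature `k_F = 1 - α`. -/
theorem bounded_curvature_coverage
    {S T : Type*} [Fintype S] [DecidableEq S] [Nonempty S]
    [Fintype T] [DecidableEq T]
    (hT : 2 ≤ Fintype.card T) (α : ℝ) (hα0 : 0 < α) (hα1 : α ≤ 1) :
    MonotoneSetFun (bcCoverage (S := S) (T := T) α) ∧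
    Submodular (bcCoverage (S := S) (T := T) α) ∧
    (1 - Finset.univ.inf'
        (by
          have : Nonempty T := Fintype.card_pos_iff.mp (by omega)
          exact Finset.univ_nonempty)
        (fun v : S × T =>
          (bcCoverage α (univ : Finset (S × T))
            - bcCoverage α ((univ : Finset (S × T)).erase v)) /
          bcCoverage α ({v} : Finset (S × T))))
      = 1 - α := by
  refine ⟨?_, ?_, ?_⟩
  · -- monotone
    intro A B hAB
    unfold bcCoverage
    refine Finset.sum_le_sum fun s _ => ?_
    have hc := visitCount_mono hAB s
    by_cases hA : 0 < visitCount A s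
    · rw [if_pos hA, if_pos (lt_of_lt_of_le hA hc)]
      have : (visitCount A s : ℝ) ≤ (visitCount B s : ℝ) := by exact_mod_cast hc
      nlinarith
    · rw [if_neg hA]
      split
      · have h1 : 1 ≤ visitCount B s := by omega
        have : (1 : ℝ) ≤ (visitCount B s : ℝ) := by exact_mod_cast h1
        nlinarith
      · exact le_rfl
  · -- submodular
    intro A B v hAB hvB
    have hvA : v ∉ A := fun h => hvB (hAB h)
    rw [bcCoverage_insert α hvB, bcCoverage_insert α hvA]
    simp only [add_sub_cancel_left]
    by_cases hA : 0 < visitCount A v.1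
    · rw [if_pos hA, if_pos (lt_of_lt_of_le hA (visitCount_mono hAB v.1))]
    · rw [if_neg hA]
      split
      · exact hα1
      · exact le_refl 1
  · -- curvature
    have hconst : ∀ v : S × T,
        (bcCoverage α (univ : Finset (S × T))
          - bcCoverage α ((univ : Finset (S × T)).erase v)) /
          bcCoverage α ({v} : Finset (S × T)) = α := by
      intro v
      have hins : insert v ((univ : Finset (S × T)).erase v) = univ :=
        Finset.insert_erase (Finset.mem_univ v)
      have hni : v ∉ (univ : Finset (S × T)).erase v := Finset.notMem_erase v _
      have hmarg := bcCoverage_insert α hni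
      rw [hins] at hmarg
      have hcount : 0 < visitCount ((univ : Finset (S × T)).erase v) v.1 := by
        have h1 : visitCount (insert v ((univ : Finset (S × T)).erase v)) v.1 =
            visitCount ((univ : Finset (S × T)).erase v) v.1 + 1 := by
          rw [visitCount_insert hni v.1, if_pos rfl]
        rw [hins, visitCount_univ] at h1
        omega
      rw [if_pos hcount] at hmarg
      rw [hmarg, bcCoverage_singleton]
      ring
    rw [show (fun v : S × T =>
          (bcCoverage α (univ : Finset (S × T))
            - bcCoverage α ((univ : Finset (S × T)).erase v)) /
          bcCoverage α ({v} : Finset (S × T))) = fun _ => α from funext hconst,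
      Finset.inf'_const]
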